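/- Equivariant maps have maximally mixed marginals: with the setup of the previous statement, additionally assume W₁ and W₂ are irreducible and P ≠ 0; normalize P to an isometry. Then the state σ = P P† / dim(V) on W₁ ⊗ W₂ (the image of the maximally mixed state on V) has both reduced states Tr_{W₂} σ and Tr_{W₁} σ maximally mixed on (the supports within) W₁ and W₂ respectively — in particular, Tr_{W₂} σ commutes with ρ_{W₁}(s) for all s ∈ G and hence is proportional to the identity on the irreducible W₁. -/

import Mathlib

open Matrix in
private lemma schur_scalar {G : Type*} [Group G] {n : ℕ} (hn : 0 < n)
    (ρ : G →* Matrix.unitaryGroup (Fin n) ℂ)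
    (hirr : ∀ Q : Matrix (Fin n) (Fin n) ℂ, Q * Q = Q → Q.IsHermitian →
      (∀ s : G, Q * (ρ s : Matrix (Fin n) (Fin n) ℂ) =
        (ρ s : Matrix (Fin n) (Fin n) ℂ) * Q) → Q = 0 ∨ Q = 1)
    (Q : Matrix (Fin n) (Fin n) ℂ) (hQ : Q.IsHermitian)
    (hcomm : ∀ s : G, Q * (ρ s : Matrix (Fin n) (Fin n) ℂ) =
      (ρ s : Matrix (Fin n) (Fin n) ℂ) * Q) :
    ∃ c : ℝ, Q = (c : ℂ) • 1 := by
  set U : Matrix (Fin n) (Fin n) ℂ := (hQ.eigenvectorUnitary : Matrix (Fin n) (Fin n) ℂ) with hU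
  have hUU : U * star U = 1 := (Matrix.mem_unitaryGroup_iff).mp hQ.eigenvectorUnitary.2
  have hUU' : star U * U = 1 := (Matrix.mem_unitaryGroup_iff').mp hQ.eigenvectorUnitary.2
  set d := hQ.eigenvalues with hd
  have hdiag : star U * Q * U = Matrix.diagonal (RCLike.ofReal ∘ d) :=
    by have h := hQ.conjStarAlgAut_star_eigenvectorUnitary; rw [Unitary.conjStarAlgAut_apply, Unitary.coe_star, star_star] at h; exact h
  have hspec : Q = U * Matrix.diagonal (RCLike.ofReal ∘ d) * star U := hQ.spectral_theorem
  set i0 : Fin n := ⟨0, hn⟩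
  set c := d i0 with hc
  set f : Fin n → ℂ := fun i => if d i = c then 1 else 0 with hf
  have hfstar : star f = f := by
    funext i; by_cases h : d i = c <;> simp [hf, h]
  set E : Matrix (Fin n) (Fin n) ℂ := U * Matrix.diagonal f * star U with hE
  have hEE : E * E = E := by
    rw [hE]
    calc U * Matrix.diagonal f * star U * (U * Matrix.diagonal f * star U)
        = U * (Matrix.diagonal f * (star U * U) * Matrix.diagonal f) * star U := by
          simp only [Matrix.mul_assoc]
      _ = U * (Matrix.diagonal f * Matrix.diagonal f) * star U := by rw [hUU']; simp
      _ = U * Matrix.diagonal f * star U := by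
          rw [Matrix.diagonal_mul_diagonal]
          have hff : (fun i => f i * f i) = f := by
            funext i; by_cases h : d i = c <;> simp [hf, h]
          rw [hff]
  have hEherm : E.IsHermitian := by
    rw [Matrix.IsHermitian, hE, Matrix.conjTranspose_mul, Matrix.conjTranspose_mul,
      Matrix.diagonal_conjTranspose, hfstar, Matrix.star_eq_conjTranspose,
      Matrix.conjTranspose_conjTranspose, Matrix.mul_assoc]
  have hEcomm : ∀ s : G, E * (ρ s : Matrix (Fin n) (Fin n) ℂ) =
      (ρ s : Matrix (Fin n) (Fin n) ℂ) * E := by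
    intro s
    set R : Matrix (Fin n) (Fin n) ℂ := (ρ s : Matrix (Fin n) (Fin n) ℂ) with hRdef
    set B : Matrix (Fin n) (Fin n) ℂ := star U * R * U with hB
    have hR : R = U * B * star U := by
      rw [hB]
      calc R = 1 * R * 1 := by simp
        _ = (U * star U) * R * (U * star U) := by rw [hUU]
        _ = U * (star U * R * U) * star U := by simp only [Matrix.mul_assoc]
    have hDB : Matrix.diagonal (RCLike.ofReal ∘ d) * B
        = B * Matrix.diagonal (RCLike.ofReal ∘ d) := by
      rw [← hdiag, hB]
      calc (star U * Q * U) * (star U * R * U)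
          = star U * (Q * ((U * star U) * R)) * U := by simp only [Matrix.mul_assoc]
        _ = star U * (Q * R) * U := by rw [hUU, Matrix.one_mul]
        _ = star U * (R * Q) * U := by rw [hcomm s]
        _ = star U * (R * ((U * star U) * Q)) * U := by rw [hUU, Matrix.one_mul]
        _ = (star U * R * U) * (star U * Q * U) := by simp only [Matrix.mul_assoc]
    have hentry : ∀ i j, ((d i : ℂ)) * B i j = B i j * (d j : ℂ) := by
      intro i j
      have h0 := congrFun (congrFun hDB i) j
      simpa [Matrix.diagonal_mul, Matrix.mul_diagonal] using h0
    have hfB : Matrix.diagonal f * B = B * Matrix.diagonal f := by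
      ext i j
      simp only [Matrix.diagonal_mul, Matrix.mul_diagonal]
      by_cases hij : d i = d j
      · have hfij : f i = f j := by simp [hf, hij]
        rw [hfij]; ring
      · have hB0 : B i j = 0 := by
          have h2 := hentry i j
          have h3 : ((d i : ℂ) - d j) * B i j = 0 := by rw [sub_mul, h2]; ring
          rcases mul_eq_zero.mp h3 with h | h
          · exact absurd (by exact_mod_cast sub_eq_zero.mp h) hij
          · exact h
        simp [hB0]
    calc E * R = U * Matrix.diagonal f * star U * (U * B * star U) := by rw [hE, ← hR]
      _ = U * (Matrix.diagonal f * ((star U * U) * B)) * star U := by simp only [Matrix.mul_assoc]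
      _ = U * (Matrix.diagonal f * B) * star U := by rw [hUU', Matrix.one_mul]
      _ = U * (B * Matrix.diagonal f) * star U := by rw [hfB]
      _ = U * (B * ((star U * U) * Matrix.diagonal f)) * star U := by rw [hUU', Matrix.one_mul]
      _ = (U * B * star U) * (U * Matrix.diagonal f * star U) := by simp only [Matrix.mul_assoc]
      _ = R * E := by rw [hE, ← hR]
  have hdiagE : Matrix.diagonal f = star U * E * U := by
    rw [hE]
    calc Matrix.diagonal f = 1 * Matrix.diagonal f * 1 := by simp
      _ = (star U * U) * Matrix.diagonal f * (star U * U) := by rw [hUU']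
      _ = star U * (U * Matrix.diagonal f * star U) * U := by simp only [Matrix.mul_assoc]
  rcases hirr E hEE hEherm hEcomm with h0 | h1
  · exfalso
    have : Matrix.diagonal f = 0 := by rw [hdiagE, h0]; simp
    have h1 := congrFun (congrFun this i0) i0
    simp [Matrix.diagonal_apply_eq, hf, hc] at h1
  · have hdf1 : Matrix.diagonal f = 1 := by rw [hdiagE, h1, Matrix.mul_one, hUU']
    have hall : ∀ i, d i = c := by
      intro i
      by_contra h
      have h2 := congrFun (congrFun hdf1 i) i
      simp [Matrix.diagonal_apply_eq, hf, h, Matrix.one_apply] at h2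
    refine ⟨c, ?_⟩
    have hdc : Matrix.diagonal (RCLike.ofReal ∘ d) = (c : ℂ) • (1 : Matrix (Fin n) (Fin n) ℂ) := by
      rw [Matrix.smul_one_eq_diagonal]
      exact congrArg _ (funext fun i => by simp [hall i])
    rw [hspec, hdc]
    rw [Matrix.mul_smul, Matrix.smul_mul, Matrix.mul_one, hUU]

open Matrix in
private lemma ptrace_right {m n : Type*} [Fintype m] [Fintype n] [DecidableEq m] [DecidableEq n]
    (A : Matrix m m ℂ) (B : Matrix n n ℂ) (hB : B.conjTranspose * B = 1)
    (Pi : Matrix (m × n) (m × n) ℂ) :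
    (Matrix.of fun i j => ∑ k, ((Matrix.kroneckerMap (· * ·) A B) * Pi *
        (Matrix.kroneckerMap (· * ·) A B).conjTranspose) (i, k) (j, k)) =
      A * (Matrix.of fun p q => ∑ l, Pi (p, l) (q, l)) * A.conjTranspose := by
  have key : ∀ (l mm : n), (∑ k, B k l * star (B k mm)) = if mm = l then (1:ℂ) else 0 := by
    intro l mm
    have h0 := congrFun (congrFun hB mm) l
    simp only [Matrix.mul_apply, Matrix.conjTranspose_apply, Matrix.one_apply] at h0
    rw [← h0]
    exact Finset.sum_congr rfl fun k _ => mul_comm _ _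
  ext i j
  simp only [Matrix.of_apply, Matrix.mul_apply, Matrix.conjTranspose_apply,
    Matrix.kroneckerMap_apply, Fintype.sum_prod_type, star_mul']
  calc ∑ k : n, ∑ q : m, ∑ mm : n,
          (∑ p : m, ∑ l : n, A i p * B k l * Pi (p, l) (q, mm)) * (star (A j q) * star (B k mm))
      = ∑ q : m, ∑ mm : n, ∑ p : m, ∑ l : n,
          (A i p * Pi (p, l) (q, mm) * star (A j q)) * (∑ k : n, B k l * star (B k mm)) := by
        simp only [Finset.sum_mul, Finset.mul_sum]
        rw [Finset.sum_comm]
        refine Finset.sum_congr rfl fun q _ => ?_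
        rw [Finset.sum_comm]
        refine Finset.sum_congr rfl fun mm _ => ?_
        rw [Finset.sum_comm]
        refine Finset.sum_congr rfl fun p _ => ?_
        rw [Finset.sum_comm]
        refine Finset.sum_congr rfl fun l _ => ?_
        exact Finset.sum_congr rfl fun k _ => by ring
    _ = ∑ q : m, ∑ mm : n, ∑ p : m, ∑ l : n,
          (A i p * Pi (p, l) (q, mm) * star (A j q)) * (if mm = l then (1:ℂ) else 0) := by
        simp only [key]
    _ = ∑ q : m, ∑ p : m, ∑ l : n, A i p * Pi (p, l) (q, l) * star (A j q) := by
        refine Finset.sum_congr rfl fun q _ => ?_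
        rw [Finset.sum_comm]
        refine Finset.sum_congr rfl fun p _ => ?_
        rw [Finset.sum_comm]
        refine Finset.sum_congr rfl fun l _ => ?_
        simp [mul_ite]
    _ = ∑ q : m, (∑ p : m, A i p * ∑ l : n, Pi (p, l) (q, l)) * star (A j q) := by
        refine Finset.sum_congr rfl fun q _ => ?_
        rw [Finset.sum_mul]
        refine Finset.sum_congr rfl fun p _ => ?_
        rw [Finset.mul_sum, Finset.sum_mul]

open Matrix in
private lemma ptrace_left {m n : Type*} [Fintype m] [Fintype n] [DecidableEq m] [DecidableEq n]
    (A : Matrix m m ℂ) (B : Matrix n n ℂ) (hA : A.conjTranspose * A = 1)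
    (Pi : Matrix (m × n) (m × n) ℂ) :
    (Matrix.of fun i j => ∑ k, ((Matrix.kroneckerMap (· * ·) A B) * Pi *
        (Matrix.kroneckerMap (· * ·) A B).conjTranspose) (k, i) (k, j)) =
      B * (Matrix.of fun p q => ∑ l, Pi (l, p) (l, q)) * B.conjTranspose := by
  have key : ∀ (p q : m), (∑ k, A k p * star (A k q)) = if q = p then (1:ℂ) else 0 := by
    intro p q
    have h0 := congrFun (congrFun hA q) p
    simp only [Matrix.mul_apply, Matrix.conjTranspose_apply, Matrix.one_apply] at h0
    rw [← h0]
    exact Finset.sum_congr rfl fun k _ => mul_comm _ _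
  ext i j
  simp only [Matrix.of_apply, Matrix.mul_apply, Matrix.conjTranspose_apply,
    Matrix.kroneckerMap_apply, Fintype.sum_prod_type, star_mul']
  calc ∑ k : m, ∑ q : m, ∑ mm : n,
          (∑ p : m, ∑ l : n, A k p * B i l * Pi (p, l) (q, mm)) * (star (A k q) * star (B j mm))
      = ∑ q : m, ∑ mm : n, ∑ p : m, ∑ l : n,
          (B i l * Pi (p, l) (q, mm) * star (B j mm)) * (∑ k : m, A k p * star (A k q)) := by
        simp only [Finset.sum_mul, Finset.mul_sum]
        rw [Finset.sum_comm]
        refine Finset.sum_congr rfl fun q _ => ?_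
        rw [Finset.sum_comm]
        refine Finset.sum_congr rfl fun mm _ => ?_
        rw [Finset.sum_comm]
        refine Finset.sum_congr rfl fun p _ => ?_
        rw [Finset.sum_comm]
        refine Finset.sum_congr rfl fun l _ => ?_
        exact Finset.sum_congr rfl fun k _ => by ring
    _ = ∑ q : m, ∑ mm : n, ∑ p : m, ∑ l : n,
          (B i l * Pi (p, l) (q, mm) * star (B j mm)) * (if q = p then (1:ℂ) else 0) := by
        simp only [key]
    _ = ∑ mm : n, ∑ p : m, ∑ l : n, B i l * Pi (p, l) (p, mm) * star (B j mm) := by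
        rw [Finset.sum_comm]
        refine Finset.sum_congr rfl fun mm _ => ?_
        rw [Finset.sum_comm]
        refine Finset.sum_congr rfl fun p _ => ?_
        rw [Finset.sum_comm]
        refine Finset.sum_congr rfl fun l _ => ?_
        simp [mul_ite]
    _ = ∑ mm : n, (∑ l : n, B i l * ∑ p : m, Pi (p, l) (p, mm)) * star (B j mm) := by
        refine Finset.sum_congr rfl fun mm _ => ?_
        rw [Finset.sum_mul]
        rw [Finset.sum_comm]
        refine Finset.sum_congr rfl fun l _ => ?_
        rw [Finset.mul_sum, Finset.sum_mul]

/-- an equivariant isometry `P : V → W₁ ⊗ W₂` between irreducible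
unitary representations of a finite group `G` sends the maximally mixed state
on `V` to a state `σ = P P† / dim V` whose reduced states on `W₁` and `W₂`
are both maximally mixed: `Tr_{W₂} σ = Id/ w₁` and `Tr_{W₁} σ = Id / w₂`.
Irreducibility is formalized, as usual for unitary representations, by
triviality of the Hermitian projections in the commutant. -/
theorem equivariant_isometry_maximally_mixed_marginals {G : Type*} [Group G] [Fintype G]
    (v w1 w2 : ℕ) (hv : 0 < v) (hw1 : 0 < w1) (hw2 : 0 < w2)
    (ρV : G →* Matrix.unitaryGroup (Fin v) ℂ)
    (ρ1 : G →* Matrix.unitaryGroup (Fin w1) ℂ)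
    (ρ2 : G →* Matrix.unitaryGroup (Fin w2) ℂ)
    (hirrV : ∀ Q : Matrix (Fin v) (Fin v) ℂ, Q * Q = Q → Q.IsHermitian →
      (∀ s : G, Q * (ρV s : Matrix (Fin v) (Fin v) ℂ) =
        (ρV s : Matrix (Fin v) (Fin v) ℂ) * Q) → Q = 0 ∨ Q = 1)
    (hirr1 : ∀ Q : Matrix (Fin w1) (Fin w1) ℂ, Q * Q = Q → Q.IsHermitian →
      (∀ s : G, Q * (ρ1 s : Matrix (Fin w1) (Fin w1) ℂ) =
        (ρ1 s : Matrix (Fin w1) (Fin w1) ℂ) * Q) → Q = 0 ∨ Q = 1)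
    (hirr2 : ∀ Q : Matrix (Fin w2) (Fin w2) ℂ, Q * Q = Q → Q.IsHermitian →
      (∀ s : G, Q * (ρ2 s : Matrix (Fin w2) (Fin w2) ℂ) =
        (ρ2 s : Matrix (Fin w2) (Fin w2) ℂ) * Q) → Q = 0 ∨ Q = 1)
    (P : Matrix (Fin w1 × Fin w2) (Fin v) ℂ) (hP : P ≠ 0)
    (hiso : P.conjTranspose * P = (1 : Matrix (Fin v) (Fin v) ℂ))
    (hequiv : ∀ s : G,
      (Matrix.kroneckerMap (· * ·) (ρ1 s : Matrix (Fin w1) (Fin w1) ℂ)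
          (ρ2 s : Matrix (Fin w2) (Fin w2) ℂ)) * P =
        P * (ρV s : Matrix (Fin v) (Fin v) ℂ)) :
    let σ : Matrix (Fin w1 × Fin w2) (Fin w1 × Fin w2) ℂ :=
      ((v : ℂ))⁻¹ • (P * P.conjTranspose)
    (Matrix.of fun i j : Fin w1 => ∑ k : Fin w2, σ (i, k) (j, k)) =
        ((w1 : ℂ))⁻¹ • (1 : Matrix (Fin w1) (Fin w1) ℂ) ∧
    (Matrix.of fun i j : Fin w2 => ∑ k : Fin w1, σ (k, i) (k, j)) =
        ((w2 : ℂ))⁻¹ • (1 : Matrix (Fin w2) (Fin w2) ℂ) := by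
  intro σ
  set Pi : Matrix (Fin w1 × Fin w2) (Fin w1 × Fin w2) ℂ := P * P.conjTranspose with hPi
  have hPiherm : Pi.conjTranspose = Pi := by
    rw [hPi, Matrix.conjTranspose_mul, Matrix.conjTranspose_conjTranspose]
  have hvC : (v : ℂ) ≠ 0 := by exact_mod_cast hv.ne'
  have hw1C : (w1 : ℂ) ≠ 0 := by exact_mod_cast hw1.ne'
  have hw2C : (w2 : ℂ) ≠ 0 := by exact_mod_cast hw2.ne'
  have htrPi : Pi.trace = (v : ℂ) := by
    rw [hPi, Matrix.trace_mul_comm, hiso, Matrix.trace_one]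
    simp
  -- conjugation invariance of Pi
  have hconj : ∀ s : G,
      (Matrix.kroneckerMap (· * ·) (ρ1 s : Matrix (Fin w1) (Fin w1) ℂ)
        (ρ2 s : Matrix (Fin w2) (Fin w2) ℂ)) * Pi *
      (Matrix.kroneckerMap (· * ·) (ρ1 s : Matrix (Fin w1) (Fin w1) ℂ)
        (ρ2 s : Matrix (Fin w2) (Fin w2) ℂ)).conjTranspose = Pi := by
    intro s
    set K := Matrix.kroneckerMap (· * ·) (ρ1 s : Matrix (Fin w1) (Fin w1) ℂ)
      (ρ2 s : Matrix (Fin w2) (Fin w2) ℂ) with hK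
    have hVu : (ρV s : Matrix (Fin v) (Fin v) ℂ) *
        (ρV s : Matrix (Fin v) (Fin v) ℂ).conjTranspose = 1 := by
      rw [← Matrix.star_eq_conjTranspose]
      exact (Matrix.mem_unitaryGroup_iff).mp (ρV s).2
    calc K * Pi * K.conjTranspose
        = (K * P) * (K * P).conjTranspose := by
          rw [Matrix.conjTranspose_mul, hPi]
          simp only [Matrix.mul_assoc]
      _ = (P * (ρV s : Matrix (Fin v) (Fin v) ℂ)) *
          (P * (ρV s : Matrix (Fin v) (Fin v) ℂ)).conjTranspose := by rw [hequiv s]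
      _ = P * ((ρV s : Matrix (Fin v) (Fin v) ℂ) *
          (ρV s : Matrix (Fin v) (Fin v) ℂ).conjTranspose) * P.conjTranspose := by
          rw [Matrix.conjTranspose_mul]
          simp only [Matrix.mul_assoc]
      _ = Pi := by rw [hVu, Matrix.mul_one, hPi]
  -- first marginal
  set S1 : Matrix (Fin w1) (Fin w1) ℂ :=
    Matrix.of (fun p q : Fin w1 => ∑ l : Fin w2, Pi (p, l) (q, l)) with hS1
  have h1 : ∀ s : G, (ρ1 s : Matrix (Fin w1) (Fin w1) ℂ) * S1 *
      (ρ1 s : Matrix (Fin w1) (Fin w1) ℂ).conjTranspose = S1 := by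
    intro s
    have hB : (ρ2 s : Matrix (Fin w2) (Fin w2) ℂ).conjTranspose *
        (ρ2 s : Matrix (Fin w2) (Fin w2) ℂ) = 1 := by
      rw [← Matrix.star_eq_conjTranspose]
      exact (Matrix.mem_unitaryGroup_iff').mp (ρ2 s).2
    have h := ptrace_right (ρ1 s : Matrix (Fin w1) (Fin w1) ℂ)
      (ρ2 s : Matrix (Fin w2) (Fin w2) ℂ) hB Pi
    rw [hconj s] at h
    rw [← h, ← hS1]
  have hcomm1 : ∀ s : G, S1 * (ρ1 s : Matrix (Fin w1) (Fin w1) ℂ) =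
      (ρ1 s : Matrix (Fin w1) (Fin w1) ℂ) * S1 := by
    intro s
    have hA : (ρ1 s : Matrix (Fin w1) (Fin w1) ℂ).conjTranspose *
        (ρ1 s : Matrix (Fin w1) (Fin w1) ℂ) = 1 := by
      rw [← Matrix.star_eq_conjTranspose]
      exact (Matrix.mem_unitaryGroup_iff').mp (ρ1 s).2
    calc S1 * (ρ1 s : Matrix (Fin w1) (Fin w1) ℂ)
        = ((ρ1 s : Matrix (Fin w1) (Fin w1) ℂ) * S1 *
            (ρ1 s : Matrix (Fin w1) (Fin w1) ℂ).conjTranspose) *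
          (ρ1 s : Matrix (Fin w1) (Fin w1) ℂ) := by rw [h1 s]
      _ = (ρ1 s : Matrix (Fin w1) (Fin w1) ℂ) * S1 *
          ((ρ1 s : Matrix (Fin w1) (Fin w1) ℂ).conjTranspose *
            (ρ1 s : Matrix (Fin w1) (Fin w1) ℂ)) := by simp only [Matrix.mul_assoc]
      _ = (ρ1 s : Matrix (Fin w1) (Fin w1) ℂ) * S1 := by rw [hA, Matrix.mul_one]
  have hherm1 : S1.IsHermitian := by
    rw [Matrix.IsHermitian]
    ext i j
    rw [Matrix.conjTranspose_apply]
    simp only [hS1, Matrix.of_apply, star_sum]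
    refine Finset.sum_congr rfl fun k _ => ?_
    have := congrFun (congrFun hPiherm (i, k)) (j, k)
    rw [Matrix.conjTranspose_apply] at this
    exact this
  obtain ⟨c1, hc1⟩ := schur_scalar hw1 ρ1 hirr1 S1 hherm1 hcomm1
  have htrS1 : S1.trace = (v : ℂ) := by
    rw [← htrPi, Matrix.trace, Matrix.trace]
    rw [Fintype.sum_prod_type]
    rfl
  have hc1v : (c1 : ℂ) * w1 = v := by
    have := htrS1
    rw [hc1, Matrix.trace_smul, Matrix.trace_one] at this
    simpa [mul_comm] using this
  -- second marginal
  set S2 : Matrix (Fin w2) (Fin w2) ℂ :=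
    Matrix.of (fun p q : Fin w2 => ∑ l : Fin w1, Pi (l, p) (l, q)) with hS2
  have h2 : ∀ s : G, (ρ2 s : Matrix (Fin w2) (Fin w2) ℂ) * S2 *
      (ρ2 s : Matrix (Fin w2) (Fin w2) ℂ).conjTranspose = S2 := by
    intro s
    have hA : (ρ1 s : Matrix (Fin w1) (Fin w1) ℂ).conjTranspose *
        (ρ1 s : Matrix (Fin w1) (Fin w1) ℂ) = 1 := by
      rw [← Matrix.star_eq_conjTranspose]
      exact (Matrix.mem_unitaryGroup_iff').mp (ρ1 s).2
    have h := ptrace_left (ρ1 s : Matrix (Fin w1) (Fin w1) ℂ)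
      (ρ2 s : Matrix (Fin w2) (Fin w2) ℂ) hA Pi
    rw [hconj s] at h
    rw [← h, ← hS2]
  have hcomm2 : ∀ s : G, S2 * (ρ2 s : Matrix (Fin w2) (Fin w2) ℂ) =
      (ρ2 s : Matrix (Fin w2) (Fin w2) ℂ) * S2 := by
    intro s
    have hB : (ρ2 s : Matrix (Fin w2) (Fin w2) ℂ).conjTranspose *
        (ρ2 s : Matrix (Fin w2) (Fin w2) ℂ) = 1 := by
      rw [← Matrix.star_eq_conjTranspose]
      exact (Matrix.mem_unitaryGroup_iff').mp (ρ2 s).2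
    calc S2 * (ρ2 s : Matrix (Fin w2) (Fin w2) ℂ)
        = ((ρ2 s : Matrix (Fin w2) (Fin w2) ℂ) * S2 *
            (ρ2 s : Matrix (Fin w2) (Fin w2) ℂ).conjTranspose) *
          (ρ2 s : Matrix (Fin w2) (Fin w2) ℂ) := by rw [h2 s]
      _ = (ρ2 s : Matrix (Fin w2) (Fin w2) ℂ) * S2 *
          ((ρ2 s : Matrix (Fin w2) (Fin w2) ℂ).conjTranspose *
            (ρ2 s : Matrix (Fin w2) (Fin w2) ℂ)) := by simp only [Matrix.mul_assoc]
      _ = (ρ2 s : Matrix (Fin w2) (Fin w2) ℂ) * S2 := by rw [hB, Matrix.mul_one]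
  have hherm2 : S2.IsHermitian := by
    rw [Matrix.IsHermitian]
    ext i j
    rw [Matrix.conjTranspose_apply]
    simp only [hS2, Matrix.of_apply, star_sum]
    refine Finset.sum_congr rfl fun k _ => ?_
    have := congrFun (congrFun hPiherm (k, i)) (k, j)
    rw [Matrix.conjTranspose_apply] at this
    exact this
  obtain ⟨c2, hc2⟩ := schur_scalar hw2 ρ2 hirr2 S2 hherm2 hcomm2
  have htrS2 : S2.trace = (v : ℂ) := by
    rw [← htrPi, Matrix.trace, Matrix.trace]
    rw [Fintype.sum_prod_type]
    rw [Finset.sum_comm]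
    rfl
  have hc2v : (c2 : ℂ) * w2 = v := by
    have := htrS2
    rw [hc2, Matrix.trace_smul, Matrix.trace_one] at this
    simpa [mul_comm] using this
  constructor
  · have hgoal : (Matrix.of fun i j : Fin w1 => ∑ k : Fin w2, σ (i, k) (j, k))
        = ((v : ℂ))⁻¹ • S1 := by
      ext i j
      simp only [Matrix.of_apply, Matrix.smul_apply, hS1, σ, smul_eq_mul, Finset.mul_sum, hPi]
    rw [hgoal, hc1, smul_smul]
    congr 1
    have hc1d : (c1 : ℂ) = (v : ℂ) / w1 := (eq_div_iff hw1C).mpr hc1v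
    rw [hc1d, div_eq_mul_inv, ← mul_assoc, inv_mul_cancel₀ hvC, one_mul]
  · have hgoal : (Matrix.of fun i j : Fin w2 => ∑ k : Fin w1, σ (k, i) (k, j))
        = ((v : ℂ))⁻¹ • S2 := by
      ext i j
      simp only [Matrix.of_apply, Matrix.smul_apply, hS2, σ, smul_eq_mul, Finset.mul_sum, hPi]
    rw [hgoal, hc2, smul_smul]
    congr 1
    have hc2d : (c2 : ℂ) = (v : ℂ) / w2 := (eq_div_iff hw2C).mpr hc2v
    rw [hc2d, div_eq_mul_inv, ← mul_assoc, inv_mul_cancel₀ hvC, one_mul]
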